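/- arXiv:0809.4526 — 5 statements merged into one kernel-verified Lean document; each statement's English description precedes it below -/
import Mathlib

section
/- For every j = 1,…,k and every s in R, ∑_{i=1}^{j} ∂/∂sⁱ [ ½( x_{(j)}(s) · ι(xⁱ(s)) + (−1)^{j+1} ι(xⁱ(s)) · x_{(j)}(s) ) ] = 0 in G_n, where x_{(j)}(s) = x₁(s)∧⋯∧x_j(s), the products are products in G_n, and ½(B·ι(v) + (−1)^{j+1} ι(v)·B) is the inner product (contraction) of the j-vector B with the vector v. -/
open MeasureTheory RealInnerProductSpace
open Topology

noncomputable section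

/-- The quadratic form `Q(v) = ‖v‖²` on Euclidean `n`-space. -/
def Qf (n : ℕ) : QuadraticForm ℝ (EuclideanSpace ℝ (Fin n)) :=
  LinearMap.BilinMap.toQuadraticMap (innerₗ (EuclideanSpace ℝ (Fin n)))

/-- The wedge product `v₁∧⋯∧v_k = (1/k!)·∑_{σ} sgn(σ)·ι(v_{σ(1)})⋯ι(v_{σ(k)})`. -/
def wedge {n k : ℕ} (v : Fin k → EuclideanSpace ℝ (Fin n)) : CliffordAlgebra (Qf n) :=
  (k.factorial : ℝ)⁻¹ • ∑ σ : Equiv.Perm (Fin k),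
    (Equiv.Perm.sign σ : ℤ) • (List.ofFn fun i => CliffordAlgebra.ι (Qf n) (v (σ i))).prod

namespace GeoCalc
variable {n : ℕ}

local notation "E" => EuclideanSpace ℝ (Fin n)
local notation "C" => CliffordAlgebra (Qf n)
local notation "ιc" => CliffordAlgebra.ι (Qf n)

def P {m : ℕ} (v : Fin m → E) : C := (List.ofFn fun i => ιc (v i)).prod

lemma anticomm (v w : E) : ιc v * ιc w + ιc w * ιc v = (2 * ⟪v, w⟫) • 1 := by
  rw [CliffordAlgebra.ι_mul_ι_add_swap, Algebra.algebraMap_eq_smul_one]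
  congr 1
  rw [Qf, LinearMap.BilinMap.polar_toQuadraticMap]
  simp [real_inner_comm v w]
  ring

lemma P_succ {m : ℕ} (v : Fin (m+1) → E) : P v = ιc (v 0) * P (v ∘ Fin.succ) := by
  simp [P, List.ofFn_succ, Function.comp]


lemma ofFn_eraseIdx {α : Type*} : ∀ {m : ℕ} (v : Fin (m+1) → α) (l : Fin (m+1)),
    (List.ofFn v).eraseIdx l = List.ofFn (v ∘ l.succAbove) := by
  intro m
  induction m with
  | zero => intro v l; rw [Fin.eq_zero l]; simp [List.ofFn_succ]
  | succ m ih =>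
    intro v l
    induction l using Fin.cases with
    | zero => simp [List.ofFn_succ]
    | succ l' =>
      rw [List.ofFn_succ, Fin.val_succ, List.eraseIdx_cons_succ,
        show (fun i : Fin (m+1) => v i.succ) = v ∘ Fin.succ from rfl, ih (v ∘ Fin.succ) l',
        List.ofFn_succ (f := v ∘ (l'.succ).succAbove)]
      congr 1
      · congr 1; funext i; simp [Function.comp, Fin.succ_succAbove_succ]

lemma iota_mul_list (w : E) : ∀ (L : List E),
    ιc w * (L.map ιc).prod =
      (∑ l : Fin L.length, ((-1:ℝ)^(l:ℕ) * (2*⟪w, L.get l⟫)) • ((L.eraseIdx l).map ιc).prod)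
      + ((-1:ℝ)^L.length) • ((L.map ιc).prod * ιc w) := by
  intro L
  induction L with
  | nil => simp
  | cons a L ih =>
    have key : ιc w * ιc a = (2*⟪w, a⟫) • (1:C) - ιc a * ιc w := by
      rw [eq_sub_iff_add_eq]; exact anticomm w a
    simp only [List.map_cons, List.prod_cons, List.length_cons]
    rw [← mul_assoc, key, sub_mul, smul_mul_assoc, one_mul, mul_assoc, ih]
    rw [Fin.sum_univ_succ]
    simp only [Fin.val_zero, pow_zero, one_mul, Fin.val_succ, List.get_eq_getElem,
      List.getElem_cons_succ, List.eraseIdx_cons_succ, List.eraseIdx_cons_zero,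
      List.getElem_cons_zero, List.map_cons, List.prod_cons]
    rw [mul_add, Finset.mul_sum]
    simp only [mul_smul_comm, pow_succ, ← mul_assoc, sub_eq_add_neg, neg_add,
      ← Finset.sum_neg_distrib, ← neg_smul, add_assoc]
    congr 1
    congr 1
    · exact Finset.sum_congr rfl fun x _ => by congr 1; ring
    · congr 1; ring
lemma iota_mul_P (w : E) : ∀ {m : ℕ} (v : Fin (m+1) → E),
    ιc w * P v = (∑ l : Fin (m+1), ((-1:ℝ)^(l:ℕ) * (2*⟪w, v l⟫)) • P (v ∘ l.succAbove))
      + ((-1:ℝ)^(m+1)) • (P v * ιc w) := by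
  intro m
  induction m with
  | zero =>
    intro v
    have key : ιc w * ιc (v 0) = (2*⟪w, v 0⟫) • (1:C) - ιc (v 0) * ιc w := by
      rw [eq_sub_iff_add_eq]; exact anticomm w (v 0)
    have h0 : P v = ιc (v 0) := by simp [P]
    have h1 : P (v ∘ (0:Fin 1).succAbove) = 1 := by simp [P]
    rw [h0, key, Fin.sum_univ_one, h1]
    simp [sub_eq_add_neg]
  | succ m ih =>
    intro v
    have key : ιc w * ιc (v 0) = (2*⟪w, v 0⟫) • (1:C) - ιc (v 0) * ιc w := by
      rw [eq_sub_iff_add_eq]; exact anticomm w (v 0)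
    have hstep : ∀ l : Fin (m+1), ιc (v 0) * P ((v ∘ Fin.succ) ∘ l.succAbove)
        = P (v ∘ (l.succ).succAbove) := by
      intro l
      rw [P_succ (v ∘ (l.succ).succAbove)]
      congr 1
      · congr 1; funext i; simp [Function.comp, Fin.succ_succAbove_succ]
    rw [P_succ v, ← mul_assoc, key, sub_mul, smul_mul_assoc, one_mul, mul_assoc,
      ih (v ∘ Fin.succ), mul_add, Finset.mul_sum]
    conv_rhs => rw [Fin.sum_univ_succ]
    simp only [mul_smul_comm, Fin.val_zero, pow_zero, one_mul, Fin.succAbove_zero]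
    simp only [hstep]
    simp only [Fin.val_succ, pow_succ, ← mul_assoc, sub_eq_add_neg, neg_add,
      ← Finset.sum_neg_distrib, ← neg_smul, add_assoc, ← P_succ v]
    congr 2
    · exact Finset.sum_congr rfl fun x _ => by
        simp only [Function.comp_apply]; congr 1; ring
    · congr 1; ring


lemma contraction_P {m : ℕ} (w : E) (v : Fin (m+1) → E) :
    (2:ℝ)⁻¹ • (P v * ιc w + ((-1:ℝ)^(m+2)) • (ιc w * P v)) =
    ∑ l : Fin (m+1), ((-1:ℝ)^(m+2+(l:ℕ)) * ⟪w, v l⟫) • P (v ∘ l.succAbove) := by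
  rw [iota_mul_P w v, smul_add ((-1:ℝ)^(m+2)), smul_smul]
  have h1 : (-1:ℝ)^(m+2) * (-1)^(m+1) = -1 := by
    rw [← pow_add]
    exact Odd.neg_one_pow ⟨m+1, by ring⟩
  rw [h1, neg_one_smul]
  rw [show ∀ (x y : C), x + (((-1:ℝ)^(m+2)) • y + -x) = ((-1:ℝ)^(m+2)) • y from
    fun x y => by abel]
  rw [Finset.smul_sum, Finset.smul_sum]
  refine Finset.sum_congr rfl fun l _ => ?_
  rw [smul_smul, smul_smul]
  congr 1
  rw [pow_add]
  ring

lemma contraction_wedge {m : ℕ} (w : E) (v : Fin (m+1) → E) :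
    (2:ℝ)⁻¹ • (wedge v * ιc w + ((-1:ℝ)^(m+2)) • (ιc w * wedge v)) =
    ((m+1).factorial : ℝ)⁻¹ • ∑ σ : Equiv.Perm (Fin (m+1)), ∑ l : Fin (m+1),
      (((Equiv.Perm.sign σ : ℤ) : ℝ) * ((-1:ℝ)^(m+2+(l:ℕ)) * ⟪w, v (σ l)⟫))
        • P ((v ∘ σ) ∘ l.succAbove) := by
  have hP : ∀ σ : Equiv.Perm (Fin (m+1)),
      (List.ofFn fun i => ιc (v (σ i))).prod = P (v ∘ σ) := fun σ => rfl
  rw [wedge]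
  simp only [hP, ← Int.cast_smul_eq_zsmul ℝ]
  rw [smul_mul_assoc, mul_smul_comm, smul_comm ((-1:ℝ)^(m+2)), ← smul_add,
    smul_comm (2:ℝ)⁻¹]
  congr 1
  rw [Finset.sum_mul, Finset.mul_sum, Finset.smul_sum, ← Finset.sum_add_distrib,
    Finset.smul_sum]
  refine Finset.sum_congr rfl fun σ _ => ?_
  rw [smul_mul_assoc, mul_smul_comm, smul_comm ((-1:ℝ)^(m+2)), ← smul_add,
    smul_comm (2:ℝ)⁻¹, contraction_P w (v ∘ σ), Finset.smul_sum]
  refine Finset.sum_congr rfl fun l _ => ?_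
  rw [smul_smul]
  rfl

section Anal
variable {A : Type*} [NormedRing A] [NormedAlgebra ℝ A]
variable {S : Type*} [NormedAddCommGroup S] [NormedSpace ℝ S]

lemma prod_ofFn_differentiableAt : ∀ {m : ℕ} (f : Fin m → S → A) (x : S),
    (∀ i, DifferentiableAt ℝ (f i) x) →
    DifferentiableAt ℝ (fun y => (List.ofFn fun i => f i y).prod) x := by
  intro m
  induction m with
  | zero => intro f x _; simp only [List.ofFn_zero, List.prod_nil]; exact differentiableAt_const 1
  | succ m ih =>
    intro f x hf
    rw [show (fun y => (List.ofFn fun i => f i y).prod)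
        = (fun y => f 0 y * (List.ofFn fun i : Fin m => f i.succ y).prod) from
      funext fun y => by rw [List.ofFn_succ, List.prod_cons]]
    exact (hf 0).mul (ih (fun i => f i.succ) x fun i => hf i.succ)

lemma fderiv_prod_ofFn_apply : ∀ {m : ℕ} (f : Fin m → S → A) (x : S) (u : S),
    (∀ i, DifferentiableAt ℝ (f i) x) →
    fderiv ℝ (fun y => (List.ofFn fun i => f i y).prod) x u
      = ∑ i : Fin m, (List.ofFn fun l => if l = i then fderiv ℝ (f l) x u else f l x).prod := by
  intro m
  induction m with
  | zero =>
    intro f x u _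
    simp only [List.ofFn_zero, List.prod_nil, Finset.univ_eq_empty, Finset.sum_empty]
    rw [fderiv_fun_const]
    rfl
  | succ m ih =>
    intro f x u hf
    rw [show (fun y => (List.ofFn fun i => f i y).prod)
        = (fun y => f 0 y * (List.ofFn fun i : Fin m => f i.succ y).prod) from
      funext fun y => by rw [List.ofFn_succ, List.prod_cons]]
    have hR : DifferentiableAt ℝ (fun y => (List.ofFn fun i : Fin m => f i.succ y).prod) x :=
      prod_ofFn_differentiableAt (fun i => f i.succ) x fun i => hf i.succ
    rw [fderiv_fun_mul' (hf 0) hR]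
    rw [ContinuousLinearMap.add_apply, ContinuousLinearMap.smul_apply,
      ContinuousLinearMap.smul_apply, op_smul_eq_mul, smul_eq_mul]
    rw [ih (fun i => f i.succ) x u fun i => hf i.succ]
    rw [Fin.sum_univ_succ]
    have h0 : (List.ofFn fun l : Fin (m+1) => if l = 0 then fderiv ℝ (f l) x u else f l x).prod
        = fderiv ℝ (f 0) x u * (List.ofFn fun l : Fin m => f l.succ x).prod := by
      rw [List.ofFn_succ, List.prod_cons, if_pos rfl]
      exact congrArg _ (congrArg List.prod (congrArg List.ofFn
        (funext fun l => if_neg (Fin.succ_ne_zero l))))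
    have hsucc : ∀ i : Fin m,
        (List.ofFn fun l : Fin (m+1) => if l = i.succ then fderiv ℝ (f l) x u else f l x).prod
        = f 0 x * (List.ofFn fun l : Fin m =>
            if l = i then fderiv ℝ (f l.succ) x u else f l.succ x).prod := by
      intro i
      rw [List.ofFn_succ, List.prod_cons, if_neg (Ne.symm (Fin.succ_ne_zero i))]
      exact congrArg _ (congrArg List.prod (congrArg List.ofFn
        (funext fun l => by simp only [Fin.succ_inj])))
    rw [h0]
    simp only [hsucc]
    rw [Finset.mul_sum]
    exact add_comm _ _

end Anal

end GeoCalc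

/-- the key Lemma: for a `C²` regular `k`-patch `x` on a neighborhood of the
rectangle `R = ∏ᵢ[aⁱ,bⁱ]` with tangent frame `xₜ`, reciprocal `C¹` frame `xr`, and
`x_{(j)} = x₁∧⋯∧x_j`, one has, for every `1 ≤ j ≤ k` and `s ∈ R`,
`∑_{i=1}^{j} ∂/∂sⁱ [ ½( x_{(j)}·ι(xⁱ) + (−1)^{j+1} ι(xⁱ)·x_{(j)} ) ] = 0` in `G_n`
(realized, via the isomorphism `e`, in a normed algebra `A` so that derivatives make sense;
the choice of norm is irrelevant since `G_n` is finite-dimensional). -/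
theorem lemma_inner_derivative_sum_zero {n k : ℕ} (hk : 1 ≤ k) (hkn : k ≤ n)
    (A : Type) [NormedRing A] [NormedAlgebra ℝ A]
    (e : CliffordAlgebra (Qf n) ≃ₐ[ℝ] A)
    (a b : Fin k → ℝ) (hab : ∀ i, a i < b i)
    (U₀ : Set (Fin k → ℝ)) (hU₀ : IsOpen U₀) (hRU₀ : Set.Icc a b ⊆ U₀)
    (x : (Fin k → ℝ) → EuclideanSpace ℝ (Fin n)) (hx : ContDiffOn ℝ 2 x U₀)
    (xt : Fin k → (Fin k → ℝ) → EuclideanSpace ℝ (Fin n))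
    (hxt : ∀ i s, xt i s = fderiv ℝ x s (Pi.single i 1))
    (hreg : ∀ s ∈ Set.Icc a b, LinearIndependent ℝ (fun i => xt i s))
    (xr : Fin k → (Fin k → ℝ) → EuclideanSpace ℝ (Fin n))
    (hxr_smooth : ∀ i, ContDiffOn ℝ 1 (xr i) (Set.Icc a b))
    (hxr_span : ∀ i, ∀ s ∈ Set.Icc a b,
      xr i s ∈ Submodule.span ℝ (Set.range fun j => xt j s))
    (hxr_dual : ∀ i j, ∀ s ∈ Set.Icc a b,
      ⟪xr i s, xt j s⟫ = if i = j then (1 : ℝ) else 0)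
    (j : ℕ) (hj : 1 ≤ j) (hjk : j ≤ k) :
    ∀ s ∈ Set.Icc a b,
      ∑ i : Fin j,
        fderivWithin ℝ
          (fun s' => (2 : ℝ)⁻¹ •
            (e (wedge fun l : Fin j => xt (Fin.castLE hjk l) s')
                * e (CliffordAlgebra.ι (Qf n) (xr (Fin.castLE hjk i) s'))
              + ((-1 : ℝ) ^ (j + 1)) •
                (e (CliffordAlgebra.ι (Qf n) (xr (Fin.castLE hjk i) s'))
                  * e (wedge fun l : Fin j => xt (Fin.castLE hjk l) s'))))
          (Set.Icc a b) s (Pi.single (Fin.castLE hjk i) 1)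
        = 0 := by
  intro s hs
  obtain ⟨j', rfl⟩ : ∃ j'', j = j'' + 1 := ⟨j - 1, by omega⟩
  classical
  set ci : Fin (j' + 1) → Fin k := Fin.castLE hjk with hci
  -- unique differentiability of the rectangle
  have hUD : UniqueDiffOn ℝ (Set.Icc a b) := by
    rw [← Set.pi_univ_Icc]
    exact UniqueDiffOn.univ_pi fun i => uniqueDiffOn_Icc (hab i)
  have hU : UniqueDiffWithinAt ℝ (Set.Icc a b) s := hUD s hs
  have hsU : s ∈ U₀ := hRU₀ hs
  -- differentiability facts
  have hxd : DifferentiableOn ℝ x U₀ := hx.differentiableOn (by norm_num)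
  have hfd1 : ContDiffOn ℝ 1 (fderiv ℝ x) U₀ := hx.fderiv_of_isOpen hU₀ (by norm_num)
  have hfdd : ∀ y ∈ U₀, DifferentiableAt ℝ (fderiv ℝ x) y := fun y hy =>
    (hfd1.contDiffAt (hU₀.mem_nhds hy)).differentiableAt (by norm_num)
  have hxt_eq : ∀ q : Fin k, xt q = fun y => (fderiv ℝ x y) (Pi.single q 1) :=
    fun q => funext fun y => hxt q y
  have hxt_diff : ∀ (q : Fin k) (y : Fin k → ℝ), y ∈ U₀ → DifferentiableAt ℝ (xt q) y := by
    intro q y hy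
    rw [hxt_eq q]
    exact (hfdd y hy).clm_apply (differentiableAt_const _)
  -- symmetry of second derivatives
  have hev : ∀ᶠ y in 𝓝 s, HasFDerivAt x (fderiv ℝ x y) y := by
    filter_upwards [hU₀.mem_nhds hsU] with y hy
    exact (hxd.differentiableAt (hU₀.mem_nhds hy)).hasFDerivAt
  have hsymm := second_derivative_symmetric_of_eventually hev (hfdd s hsU).hasFDerivAt
  set Y : Fin k → Fin k → EuclideanSpace ℝ (Fin n) :=
    fun p q => fderiv ℝ (xt q) s (Pi.single p 1) with hYdef
  have hfxt : ∀ q : Fin k,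
      fderiv ℝ (xt q) s = (fderiv ℝ (fderiv ℝ x) s).flip (Pi.single q 1) := by
    intro q
    rw [hxt_eq q, fderiv_clm_apply (hfdd s hsU) (differentiableAt_const _)]
    simp
  have hYsymm : ∀ p q, Y p q = Y q p := by
    intro p q
    simp only [hYdef, hfxt]
    simpa using hsymm (Pi.single p 1) (Pi.single q 1)
  -- continuous linear realization of e ∘ ι
  set eιL : EuclideanSpace ℝ (Fin n) →L[ℝ] A :=
    LinearMap.toContinuousLinearMap ((e.toLinearMap).comp (CliffordAlgebra.ι (Qf n)))
    with heιLdef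
  have heι : ∀ v, eιL v = e (CliffordAlgebra.ι (Qf n) v) := fun v => rfl
  set X : Fin (j' + 1) → (Fin k → ℝ) → A := fun q y => eιL (xt (ci q) y) with hXdef
  have hX_diff : ∀ (q : Fin (j' + 1)) (y : Fin k → ℝ), y ∈ U₀ →
      DifferentiableAt ℝ (X q) y := fun q y hy =>
    eιL.differentiableAt.comp y (hxt_diff (ci q) y hy)
  have hX_fderiv : ∀ (q : Fin (j' + 1)) (u : Fin k → ℝ),
      fderiv ℝ (X q) s u = eιL (fderiv ℝ (xt (ci q)) s u) := by
    intro q u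
    have hxq : X q = (fun z => eιL z) ∘ (xt (ci q)) := rfl
    rw [hxq, fderiv_comp s eιL.differentiableAt (hxt_diff _ s hsU)]
    simp
  -- products and their derivatives
  set Pp : Equiv.Perm (Fin (j' + 1)) → Fin (j' + 1) → (Fin k → ℝ) → A := fun σ l y =>
    (List.ofFn fun m' : Fin j' => X (σ (l.succAbove m')) y).prod with hPpdef
  have hPp_diff : ∀ σ l (y : Fin k → ℝ), y ∈ U₀ → DifferentiableAt ℝ (Pp σ l) y :=
    fun σ l y hy =>
      GeoCalc.prod_ofFn_differentiableAt (fun m' => X (σ (l.succAbove m'))) y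
        fun m' => hX_diff _ y hy
  set Qt : Equiv.Perm (Fin (j' + 1)) → Fin (j' + 1) → Fin j' → A := fun σ l m =>
    (List.ofFn fun m' : Fin j' => if m' = m then eιL (Y (ci (σ l)) (ci (σ (l.succAbove m'))))
      else X (σ (l.succAbove m')) s).prod with hQtdef
  have hPder : ∀ σ l, fderiv ℝ (Pp σ l) s (Pi.single (ci (σ l)) 1) = ∑ m : Fin j', Qt σ l m := by
    intro σ l
    refine (GeoCalc.fderiv_prod_ofFn_apply (fun m' => X (σ (l.succAbove m'))) s
      (Pi.single (ci (σ l)) 1) (fun m' => hX_diff _ s hsU)).trans ?_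
    refine Finset.sum_congr rfl fun m _ => ?_
    congr 1
    refine congrArg List.ofFn (funext fun m' => ?_)
    by_cases hm : m' = m
    · rw [if_pos hm, if_pos hm, hX_fderiv]
    · rw [if_neg hm, if_neg hm]
  -- the key cancellation
  have hkey : ∀ (l : Fin (j' + 1)) (m : Fin j'),
      ∑ σ : Equiv.Perm (Fin (j' + 1)), ((Equiv.Perm.sign σ : ℤ) : ℝ) • Qt σ l m = 0 := by
    intro l m
    set τ := Equiv.swap l (l.succAbove m) with hτdef
    have hne : l.succAbove m ≠ l := Fin.succAbove_ne l m
    have hQτ : ∀ σ, Qt (σ * τ) l m = Qt σ l m := by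
      intro σ
      refine congrArg List.prod (congrArg List.ofFn (funext fun m' => ?_))
      by_cases hm : m' = m
      · subst hm
        rw [if_pos rfl, if_pos rfl]
        have e1 : (σ * τ) l = σ (l.succAbove m') := by
          rw [Equiv.Perm.mul_apply, hτdef, Equiv.swap_apply_left]
        have e2 : (σ * τ) (l.succAbove m') = σ l := by
          rw [Equiv.Perm.mul_apply, hτdef, Equiv.swap_apply_right]
        rw [e1, e2]
        exact congrArg eιL (hYsymm _ _)
      · rw [if_neg hm, if_neg hm]
        have e3 : (σ * τ) (l.succAbove m') = σ (l.succAbove m') := by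
          rw [Equiv.Perm.mul_apply, hτdef,
            Equiv.swap_apply_of_ne_of_ne (Fin.succAbove_ne l m')
              (fun h => hm (Fin.succAbove_right_injective h))]
        rw [e3]
    have hsign : ∀ σ : Equiv.Perm (Fin (j' + 1)),
        (((Equiv.Perm.sign (σ * τ) : ℤ)) : ℝ) = -(((Equiv.Perm.sign σ : ℤ)) : ℝ) := by
      intro σ
      rw [Equiv.Perm.sign_mul, hτdef, Equiv.Perm.sign_swap (Ne.symm hne)]
      push_cast
      ring
    set S := ∑ σ : Equiv.Perm (Fin (j' + 1)), ((Equiv.Perm.sign σ : ℤ) : ℝ) • Qt σ l m with hSdef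
    have hS : S = ∑ σ : Equiv.Perm (Fin (j' + 1)),
        ((Equiv.Perm.sign (σ * τ) : ℤ) : ℝ) • Qt (σ * τ) l m :=
      (Fintype.sum_equiv (Equiv.mulRight τ)
        (fun σ => ((Equiv.Perm.sign (σ * τ) : ℤ) : ℝ) • Qt (σ * τ) l m)
        (fun σ => ((Equiv.Perm.sign σ : ℤ) : ℝ) • Qt σ l m) (fun σ => rfl)).symm
    have hSneg : S = -S := by
      conv_lhs => rw [hS]
      rw [← Finset.sum_neg_distrib]
      exact Finset.sum_congr rfl fun σ _ => by rw [hQτ σ, hsign σ, neg_smul]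
    have hadd : S + S = 0 := by
      nth_rewrite 1 [hSneg]
      exact neg_add_cancel S
    have h2 : (2 : ℝ) • S = 0 := by rw [two_smul]; exact hadd
    calc S = (2 : ℝ)⁻¹ • ((2 : ℝ) • S) := by rw [smul_smul]; norm_num
    _ = 0 := by rw [h2, smul_zero]
  -- coefficients and the auxiliary functions G
  set coeff : Equiv.Perm (Fin (j' + 1)) → Fin (j' + 1) → Fin (j' + 1) → ℝ := fun σ l i =>
    ((Equiv.Perm.sign σ : ℤ) : ℝ) * ((-1 : ℝ) ^ (j' + 2 + (l : ℕ)) *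
      (if σ l = i then (1 : ℝ) else 0)) with hcoeffdef
  set G : Fin (j' + 1) → (Fin k → ℝ) → A := fun i y =>
    ((j' + 1).factorial : ℝ)⁻¹ • ∑ σ : Equiv.Perm (Fin (j' + 1)), ∑ l : Fin (j' + 1),
      coeff σ l i • Pp σ l y with hGdef
  have hG_diff : ∀ i, DifferentiableAt ℝ (G i) s := by
    intro i
    refine DifferentiableAt.fun_const_smul ?_ _
    refine DifferentiableAt.fun_sum fun σ _ => ?_
    exact DifferentiableAt.fun_sum fun l _ => (hPp_diff σ l s hsU).fun_const_smul _
  -- F = G on the rectangle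
  have hFG : ∀ i : Fin (j' + 1), ∀ y ∈ Set.Icc a b,
      (2 : ℝ)⁻¹ • (e (wedge fun l : Fin (j' + 1) => xt (ci l) y)
          * e (CliffordAlgebra.ι (Qf n) (xr (ci i) y))
        + ((-1 : ℝ) ^ (j' + 1 + 1)) • (e (CliffordAlgebra.ι (Qf n) (xr (ci i) y))
          * e (wedge fun l : Fin (j' + 1) => xt (ci l) y))) = G i y := by
    intro i y hy
    set w : EuclideanSpace ℝ (Fin n) := xr (ci i) y with hwdef
    set v : Fin (j' + 1) → EuclideanSpace ℝ (Fin n) := fun l => xt (ci l) y with hvdef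
    have h1 : (2 : ℝ)⁻¹ • (e (wedge v) * e (CliffordAlgebra.ι (Qf n) w)
        + ((-1 : ℝ) ^ (j' + 1 + 1)) • (e (CliffordAlgebra.ι (Qf n) w) * e (wedge v)))
        = e ((2 : ℝ)⁻¹ • (wedge v * CliffordAlgebra.ι (Qf n) w
            + ((-1 : ℝ) ^ (j' + 2)) • (CliffordAlgebra.ι (Qf n) w * wedge v))) := by
      rw [_root_.map_smul, map_add, map_mul, _root_.map_smul, map_mul]
    rw [h1, GeoCalc.contraction_wedge w v, _root_.map_smul, map_sum]
    congr 1
    refine Finset.sum_congr rfl fun σ _ => ?_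
    rw [map_sum]
    refine Finset.sum_congr rfl fun l _ => ?_
    rw [_root_.map_smul]
    have hcoef : ((Equiv.Perm.sign σ : ℤ) : ℝ) * ((-1 : ℝ) ^ (j' + 2 + (l : ℕ)) * ⟪w, v (σ l)⟫)
        = coeff σ l i := by
      rw [hcoeffdef]
      congr 2
      rw [hwdef, hvdef]
      rw [hxr_dual (ci i) (ci (σ l)) y hy]
      by_cases h : σ l = i
      · rw [if_pos h, if_pos (by rw [h])]
      · rw [if_neg ?_, if_neg h]
        exact fun hc => h (Fin.castLE_injective hjk hc).symm
    rw [hcoef]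
    congr 1
    rw [GeoCalc.P, map_list_prod, List.map_ofFn]
    exact congrArg List.prod (congrArg List.ofFn (funext fun m' => rfl))
  -- derivative of G
  have hGder : ∀ i (u : Fin k → ℝ), fderiv ℝ (G i) s u =
      ((j' + 1).factorial : ℝ)⁻¹ • ∑ σ : Equiv.Perm (Fin (j' + 1)), ∑ l : Fin (j' + 1),
        coeff σ l i • fderiv ℝ (Pp σ l) s u := by
    intro i u
    have hsum1 : ∀ σ : Equiv.Perm (Fin (j' + 1)),
        DifferentiableAt ℝ (fun y => ∑ l : Fin (j' + 1), coeff σ l i • Pp σ l y) s :=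
      fun σ => DifferentiableAt.fun_sum fun l _ => (hPp_diff σ l s hsU).fun_const_smul _
    have hsum : DifferentiableAt ℝ
        (fun y => ∑ σ : Equiv.Perm (Fin (j' + 1)), ∑ l : Fin (j' + 1),
          coeff σ l i • Pp σ l y) s :=
      DifferentiableAt.fun_sum fun σ _ => hsum1 σ
    have hGi : G i = fun y => ((j' + 1).factorial : ℝ)⁻¹ •
        ∑ σ : Equiv.Perm (Fin (j' + 1)), ∑ l : Fin (j' + 1), coeff σ l i • Pp σ l y := rfl
    rw [hGi, fderiv_fun_const_smul hsum, ContinuousLinearMap.smul_apply]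
    congr 1
    rw [fderiv_fun_sum (fun σ _ => hsum1 σ), ContinuousLinearMap.sum_apply]
    refine Finset.sum_congr rfl fun σ _ => ?_
    rw [fderiv_fun_sum (fun l _ => (hPp_diff σ l s hsU).fun_const_smul (coeff σ l i)),
      ContinuousLinearMap.sum_apply]
    refine Finset.sum_congr rfl fun l _ => ?_
    rw [fderiv_fun_const_smul (hPp_diff σ l s hsU), ContinuousLinearMap.smul_apply]
  -- put everything together
  have hstep : ∀ i : Fin (j' + 1),
      fderivWithin ℝ
          (fun s' => (2 : ℝ)⁻¹ •
            (e (wedge fun l : Fin (j' + 1) => xt (ci l) s')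
                * e (CliffordAlgebra.ι (Qf n) (xr (ci i) s'))
              + ((-1 : ℝ) ^ (j' + 1 + 1)) •
                (e (CliffordAlgebra.ι (Qf n) (xr (ci i) s'))
                  * e (wedge fun l : Fin (j' + 1) => xt (ci l) s'))))
          (Set.Icc a b) s (Pi.single (ci i) 1)
        = fderiv ℝ (G i) s (Pi.single (ci i) 1) := by
    intro i
    rw [fderivWithin_congr (hFG i) (hFG i s hs)]
    rw [(hG_diff i).fderivWithin hU]
  rw [show (∑ i : Fin (j' + 1),
        fderivWithin ℝ
          (fun s' => (2 : ℝ)⁻¹ •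
            (e (wedge fun l : Fin (j' + 1) => xt (ci l) s')
                * e (CliffordAlgebra.ι (Qf n) (xr (ci i) s'))
              + ((-1 : ℝ) ^ (j' + 1 + 1)) •
                (e (CliffordAlgebra.ι (Qf n) (xr (ci i) s'))
                  * e (wedge fun l : Fin (j' + 1) => xt (ci l) s'))))
          (Set.Icc a b) s (Pi.single (ci i) 1))
      = ∑ i : Fin (j' + 1), fderiv ℝ (G i) s (Pi.single (ci i) 1) from
    Finset.sum_congr rfl fun i _ => hstep i]
  -- now compute the sum of the derivatives
  have hcollapse : ∀ (σ : Equiv.Perm (Fin (j' + 1))) (l : Fin (j' + 1)),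
      ∑ i : Fin (j' + 1), coeff σ l i • fderiv ℝ (Pp σ l) s (Pi.single (ci i) 1)
      = (((Equiv.Perm.sign σ : ℤ) : ℝ) * (-1 : ℝ) ^ (j' + 2 + (l : ℕ))) •
          ∑ m : Fin j', Qt σ l m := by
    intro σ l
    have hterm : ∀ i : Fin (j' + 1), coeff σ l i • fderiv ℝ (Pp σ l) s (Pi.single (ci i) 1)
        = if σ l = i then (((Equiv.Perm.sign σ : ℤ) : ℝ) * (-1 : ℝ) ^ (j' + 2 + (l : ℕ))) •
            fderiv ℝ (Pp σ l) s (Pi.single (ci i) 1) else 0 := by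
      intro i
      simp only [hcoeffdef]
      by_cases h : σ l = i
      · rw [if_pos h, if_pos h, mul_one]
      · rw [if_neg h, if_neg h, mul_zero, mul_zero, zero_smul]
    rw [Finset.sum_congr rfl fun i _ => hterm i, Finset.sum_ite_eq]
    simp only [Finset.mem_univ, if_true]
    rw [hPder σ l]
  calc (∑ i : Fin (j' + 1), fderiv ℝ (G i) s (Pi.single (ci i) 1))
      = ∑ i : Fin (j' + 1), ((j' + 1).factorial : ℝ)⁻¹ •
          ∑ σ : Equiv.Perm (Fin (j' + 1)), ∑ l : Fin (j' + 1),
            coeff σ l i • fderiv ℝ (Pp σ l) s (Pi.single (ci i) 1) :=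
        Finset.sum_congr rfl fun i _ => hGder i _
    _ = ((j' + 1).factorial : ℝ)⁻¹ • ∑ i : Fin (j' + 1),
          ∑ σ : Equiv.Perm (Fin (j' + 1)), ∑ l : Fin (j' + 1),
            coeff σ l i • fderiv ℝ (Pp σ l) s (Pi.single (ci i) 1) := by
        rw [Finset.smul_sum]
    _ = ((j' + 1).factorial : ℝ)⁻¹ • ∑ σ : Equiv.Perm (Fin (j' + 1)), ∑ l : Fin (j' + 1),
          ∑ i : Fin (j' + 1), coeff σ l i • fderiv ℝ (Pp σ l) s (Pi.single (ci i) 1) := by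
        rw [Finset.sum_comm]
        exact congrArg _ (Finset.sum_congr rfl fun σ _ => Finset.sum_comm)
    _ = ((j' + 1).factorial : ℝ)⁻¹ • ∑ σ : Equiv.Perm (Fin (j' + 1)), ∑ l : Fin (j' + 1),
          (((Equiv.Perm.sign σ : ℤ) : ℝ) * (-1 : ℝ) ^ (j' + 2 + (l : ℕ))) •
            ∑ m : Fin j', Qt σ l m := by
        exact congrArg _ (Finset.sum_congr rfl fun σ _ =>
          Finset.sum_congr rfl fun l _ => hcollapse σ l)
    _ = ((j' + 1).factorial : ℝ)⁻¹ • ∑ σ : Equiv.Perm (Fin (j' + 1)), ∑ l : Fin (j' + 1),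
          ∑ m : Fin j', ((-1 : ℝ) ^ (j' + 2 + (l : ℕ))) •
            (((Equiv.Perm.sign σ : ℤ) : ℝ) • Qt σ l m) := by
        refine congrArg _ (Finset.sum_congr rfl fun σ _ =>
          Finset.sum_congr rfl fun l _ => ?_)
        rw [Finset.smul_sum]
        exact Finset.sum_congr rfl fun m _ => by rw [smul_smul, mul_comm]
    _ = ((j' + 1).factorial : ℝ)⁻¹ • ∑ l : Fin (j' + 1), ∑ m : Fin j',
          ((-1 : ℝ) ^ (j' + 2 + (l : ℕ))) •
            ∑ σ : Equiv.Perm (Fin (j' + 1)), ((Equiv.Perm.sign σ : ℤ) : ℝ) • Qt σ l m := by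
        rw [Finset.sum_comm]
        refine congrArg _ (Finset.sum_congr rfl fun l _ => ?_)
        rw [Finset.sum_comm]
        exact Finset.sum_congr rfl fun m _ => (Finset.smul_sum).symm
    _ = 0 := by
        simp only [hkey, smul_zero, Finset.sum_const_zero]
end
end

section
/- (Green's theorem, circulation form, on a 2-patch in the plane.) Let R = [a¹,b¹]×[a²,b²] ⊂ ℝ², let x : U₀ → ℝ² be a C² map on an open neighborhood U₀ of R whose partial derivatives x₁(s) = ∂x/∂s¹(s) and x₂(s) = ∂x/∂s²(s) are linearly independent for every s ∈ R, and let F = (P,Q) : U → ℝ² be a C¹ vector field on an open set U containing x(R). Then ∫_R (∂Q/∂x − ∂P/∂y)(x(s)) · det[x₁(s), x₂(s)] ds¹ds² = ∫_{a¹}^{b¹} ⟪F(x(t,a²)), x₁(t,a²)⟫ dt + ∫_{a²}^{b²} ⟪F(x(b¹,t)), x₂(b¹,t)⟫ dt − ∫_{a¹}^{b¹} ⟪F(x(t,b²)), x₁(t,b²)⟫ dt − ∫_{a²}^{b²} ⟪F(x(a¹,t)), x₂(a¹,t)⟫ dt, where det[u,v] = u₁v₂ − u₂v₁ and ∂Q/∂x,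 ∂P/∂y denote partial derivatives with respect to the first and second coordinates of ℝ². -/
open MeasureTheory RealInnerProductSpace

noncomputable section

/-- Decomposition of a vector in `ℝ²`. -/
lemma euclidean_decomp (w : EuclideanSpace ℝ (Fin 2)) :
    w = w 0 • EuclideanSpace.single 0 (1 : ℝ) + w 1 • EuclideanSpace.single 1 (1 : ℝ) := by
  ext i
  fin_cases i <;> simp [EuclideanSpace.single_apply]

/-- The bilinear antisymmetrization identity in the plane. -/
lemma inner_antisymm (T : EuclideanSpace ℝ (Fin 2) →L[ℝ] EuclideanSpace ℝ (Fin 2))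
    (u v : EuclideanSpace ℝ (Fin 2)) :
    ⟪T u, v⟫ - ⟪T v, u⟫
      = (T (EuclideanSpace.single 0 (1 : ℝ)) 1 - T (EuclideanSpace.single 1 (1 : ℝ)) 0)
        * (u 0 * v 1 - u 1 * v 0) := by
  have hT : ∀ w : EuclideanSpace ℝ (Fin 2),
      T w = w 0 • T (EuclideanSpace.single 0 (1 : ℝ)) + w 1 • T (EuclideanSpace.single 1 (1 : ℝ)) := by
    intro w
    conv_lhs => rw [euclidean_decomp w]
    simp
  rw [hT u, hT v]
  simp only [PiLp.inner_apply, RCLike.inner_apply, conj_trivial, Fin.sum_univ_two,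
    PiLp.add_apply, PiLp.smul_apply, smul_eq_mul]
  ring

/-- Green's theorem, circulation form, on a 2-patch in the plane.
`x : U₀ → ℝ²` is a `C²` regular 2-patch on a neighborhood `U₀` of the rectangle
`R = [a¹,b¹]×[a²,b²]`, and `F = (P,Q)` is a `C¹` vector field on an open set `U ⊇ x(R)`.
Then `∫_R (∂Q/∂x − ∂P/∂y)(x(s))·det[x₁(s),x₂(s)] ds` equals the circulation of `F`
around the boundary of the patch. -/
theorem greens_theorem_circulation
    (a₁ b₁ a₂ b₂ : ℝ) (ha₁ : a₁ < b₁) (ha₂ : a₂ < b₂)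
    (U₀ : Set (ℝ × ℝ)) (hU₀ : IsOpen U₀) (hRU₀ : Set.Icc (a₁, a₂) (b₁, b₂) ⊆ U₀)
    (x : ℝ × ℝ → EuclideanSpace ℝ (Fin 2)) (hx : ContDiffOn ℝ 2 x U₀)
    -- the tangent vectors x₁, x₂
    (x₁ x₂ : ℝ × ℝ → EuclideanSpace ℝ (Fin 2))
    (hx₁ : ∀ s, x₁ s = fderiv ℝ x s (1, 0)) (hx₂ : ∀ s, x₂ s = fderiv ℝ x s (0, 1))
    (hreg : ∀ s ∈ Set.Icc (a₁, a₂) (b₁, b₂), LinearIndependent ℝ ![x₁ s, x₂ s])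
    (U : Set (EuclideanSpace ℝ (Fin 2))) (hU : IsOpen U)
    (hxRU : x '' Set.Icc (a₁, a₂) (b₁, b₂) ⊆ U)
    (F : EuclideanSpace ℝ (Fin 2) → EuclideanSpace ℝ (Fin 2)) (hF : ContDiffOn ℝ 1 F U) :
    (∫ s in Set.Icc (a₁, a₂) (b₁, b₂),
        (fderiv ℝ F (x s) (EuclideanSpace.single 0 (1 : ℝ)) 1
          - fderiv ℝ F (x s) (EuclideanSpace.single 1 (1 : ℝ)) 0) *
        (x₁ s 0 * x₂ s 1 - x₁ s 1 * x₂ s 0))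
      = (∫ t in a₁..b₁, ⟪F (x (t, a₂)), x₁ (t, a₂)⟫)
        + (∫ t in a₂..b₂, ⟪F (x (b₁, t)), x₂ (b₁, t)⟫)
        - (∫ t in a₁..b₁, ⟪F (x (t, b₂)), x₁ (t, b₂)⟫)
        - (∫ t in a₂..b₂, ⟪F (x (a₁, t)), x₂ (a₁, t)⟫) := by
  set R : Set (ℝ × ℝ) := Set.Icc (a₁, a₂) (b₁, b₂) with hRdef
  have hx₁f : x₁ = fun s => fderiv ℝ x s (1, 0) := funext hx₁
  have hx₂f : x₂ = fun s => fderiv ℝ x s (0, 1) := funext hx₂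
  -- the open neighborhood `V` of `R` on which everything is smooth
  set V : Set (ℝ × ℝ) := U₀ ∩ x ⁻¹' U with hVdef
  have hV : IsOpen V := hx.continuousOn.isOpen_inter_preimage hU₀ hU
  have hVU₀ : V ⊆ U₀ := Set.inter_subset_left
  have hRV : R ⊆ V := fun s hs => ⟨hRU₀ hs, hxRU ⟨s, hs, rfl⟩⟩
  -- smoothness
  have hdx : ContDiffOn ℝ 1 (fderiv ℝ x) U₀ := hx.fderiv_of_isOpen hU₀ (by norm_num)
  have hx₁c : ContDiffOn ℝ 1 x₁ U₀ := by
    rw [hx₁f]; exact hdx.clm_apply contDiffOn_const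
  have hx₂c : ContDiffOn ℝ 1 x₂ U₀ := by
    rw [hx₂f]; exact hdx.clm_apply contDiffOn_const
  have hFx : ContDiffOn ℝ 1 (fun s => F (x s)) V :=
    hF.comp ((hx.of_le one_le_two).mono hVU₀) (fun s hs => hs.2)
  -- the two component functions
  set P : ℝ × ℝ → ℝ := fun s => ⟪F (x s), x₁ s⟫ with hPdef
  set G : ℝ × ℝ → ℝ := fun s => ⟪F (x s), x₂ s⟫ with hGdef
  have hPc : ContDiffOn ℝ 1 P V := hFx.inner ℝ (hx₁c.mono hVU₀)
  have hGc : ContDiffOn ℝ 1 G V := hFx.inner ℝ (hx₂c.mono hVU₀)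
  have hPd : DifferentiableOn ℝ P V := hPc.differentiableOn one_ne_zero
  have hGd : DifferentiableOn ℝ G V := hGc.differentiableOn one_ne_zero
  -- the key pointwise divergence identity
  have key : ∀ s ∈ V,
      fderiv ℝ G s (1, 0) - fderiv ℝ P s (0, 1)
        = (fderiv ℝ F (x s) (EuclideanSpace.single 0 (1 : ℝ)) 1
            - fderiv ℝ F (x s) (EuclideanSpace.single 1 (1 : ℝ)) 0)
          * (x₁ s 0 * x₂ s 1 - x₁ s 1 * x₂ s 0) := by
    intro s hs
    have hsU₀ : s ∈ U₀ := hVU₀ hs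
    have hxdAll : ∀ t ∈ U₀, HasFDerivAt x (fderiv ℝ x t) t := fun t ht =>
      ((hx.differentiableOn two_ne_zero).differentiableAt (hU₀.mem_nhds ht)).hasFDerivAt
    have hFd : HasFDerivAt F (fderiv ℝ F (x s)) (x s) :=
      ((hF.differentiableOn one_ne_zero).differentiableAt (hU.mem_nhds hs.2)).hasFDerivAt
    have hdxd : HasFDerivAt (fderiv ℝ x) (fderiv ℝ (fderiv ℝ x) s) s :=
      ((hdx.differentiableOn one_ne_zero).differentiableAt (hU₀.mem_nhds hsU₀)).hasFDerivAt
    set x'' := fderiv ℝ (fderiv ℝ x) s with hx''def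
    have hsymm : x'' (1, 0) (0, 1) = x'' (0, 1) (1, 0) :=
      second_derivative_symmetric_of_eventually
        (Filter.eventually_of_mem (hU₀.mem_nhds hsU₀) hxdAll) hdxd (1, 0) (0, 1)
    have h1 : HasFDerivAt (fun t => F (x t))
        ((fderiv ℝ F (x s)).comp (fderiv ℝ x s)) s := hFd.comp s (hxdAll s hsU₀)
    have h2 : HasFDerivAt x₁ (x''.flip (1, 0)) s := by
      rw [hx₁f]
      simpa using hdxd.clm_apply (hasFDerivAt_const ((1 : ℝ), (0 : ℝ)) s)
    have h3 : HasFDerivAt x₂ (x''.flip (0, 1)) s := by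
      rw [hx₂f]
      simpa using hdxd.clm_apply (hasFDerivAt_const ((0 : ℝ), (1 : ℝ)) s)
    have hP : HasFDerivAt P
        ((fderivInnerCLM ℝ (F (x s), x₁ s)).comp
          (((fderiv ℝ F (x s)).comp (fderiv ℝ x s)).prod (x''.flip (1, 0)))) s :=
      h1.inner ℝ h2
    have hG : HasFDerivAt G
        ((fderivInnerCLM ℝ (F (x s), x₂ s)).comp
          (((fderiv ℝ F (x s)).comp (fderiv ℝ x s)).prod (x''.flip (0, 1)))) s :=
      h1.inner ℝ h3
    rw [hP.fderiv, hG.fderiv]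
    simp only [ContinuousLinearMap.comp_apply, ContinuousLinearMap.prod_apply,
      fderivInnerCLM_apply, ContinuousLinearMap.flip_apply]
    rw [← hx₁ s, ← hx₂ s, hsymm]
    have := inner_antisymm (fderiv ℝ F (x s)) (x₁ s) (x₂ s)
    linarith [this]
  -- continuity of the target integrand on R
  have hxcR : ContinuousOn x R := hx.continuousOn.mono (fun s hs => hVU₀ (hRV hs))
  have hdFc : ContinuousOn (fun s => fderiv ℝ F (x s)) R :=
    (hF.continuousOn_fderiv_of_isOpen hU le_rfl).comp hxcR (fun s hs => (hRV hs).2)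
  have hcoord : ∀ (i : Fin 2) (v : EuclideanSpace ℝ (Fin 2)),
      ContinuousOn (fun s => fderiv ℝ F (x s) v i) R := by
    intro i v
    exact ((EuclideanSpace.proj i).continuous.comp_continuousOn
      (hdFc.clm_apply continuousOn_const))
  have hx₁cR : ContinuousOn x₁ R := (hx₁c.continuousOn).mono (fun s hs => hVU₀ (hRV hs))
  have hx₂cR : ContinuousOn x₂ R := (hx₂c.continuousOn).mono (fun s hs => hVU₀ (hRV hs))
  have hcoord₁ : ∀ i : Fin 2, ContinuousOn (fun s => x₁ s i) R := fun i =>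
    (EuclideanSpace.proj i).continuous.comp_continuousOn hx₁cR
  have hcoord₂ : ∀ i : Fin 2, ContinuousOn (fun s => x₂ s i) R := fun i =>
    (EuclideanSpace.proj i).continuous.comp_continuousOn hx₂cR
  have hcont : ContinuousOn (fun s =>
      (fderiv ℝ F (x s) (EuclideanSpace.single 0 (1 : ℝ)) 1
        - fderiv ℝ F (x s) (EuclideanSpace.single 1 (1 : ℝ)) 0) *
      (x₁ s 0 * x₂ s 1 - x₁ s 1 * x₂ s 0)) R :=
    ((hcoord 1 _).sub (hcoord 0 _)).mul
      (((hcoord₁ 0).mul (hcoord₂ 1)).sub ((hcoord₁ 1).mul (hcoord₂ 0)))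
  have hInt : IntegrableOn (fun s =>
      (fderiv ℝ F (x s) (EuclideanSpace.single 0 (1 : ℝ)) 1
        - fderiv ℝ F (x s) (EuclideanSpace.single 1 (1 : ℝ)) 0) *
      (x₁ s 0 * x₂ s 1 - x₁ s 1 * x₂ s 0)) R :=
    hcont.integrableOn_compact isCompact_Icc
  -- apply the divergence theorem
  have hle : ((a₁, a₂) : ℝ × ℝ) ≤ (b₁, b₂) := ⟨ha₁.le, ha₂.le⟩
  have hdiv := integral_divergence_prod_Icc_of_hasFDerivAt_off_countable_of_le
    G (fun s => -P s) (fun s => fderiv ℝ G s) (fun s => -(fderiv ℝ P s))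
    (a₁, a₂) (b₁, b₂) hle ∅ Set.countable_empty
    (hGc.continuousOn.mono hRV)
    ((hPc.continuousOn.mono hRV).neg)
    (fun s hs => (hGd.differentiableAt (hV.mem_nhds
      (hRV (Set.mem_of_mem_of_subset hs.1 (by
        rw [hRdef, Set.Icc_prod_eq]
        exact Set.prod_mono Set.Ioo_subset_Icc_self Set.Ioo_subset_Icc_self))))).hasFDerivAt)
    (fun s hs => ((hPd.differentiableAt (hV.mem_nhds
      (hRV (Set.mem_of_mem_of_subset hs.1 (by
        rw [hRdef, Set.Icc_prod_eq]
        exact Set.prod_mono Set.Ioo_subset_Icc_self Set.Ioo_subset_Icc_self))))).hasFDerivAt).neg)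
    (by
      apply hInt.congr_fun _ measurableSet_Icc
      intro s hs
      simp only [ContinuousLinearMap.neg_apply]
      rw [← key s (hRV hs)]
      ring)
  have heq : (∫ s in R,
      (fderiv ℝ F (x s) (EuclideanSpace.single 0 (1 : ℝ)) 1
        - fderiv ℝ F (x s) (EuclideanSpace.single 1 (1 : ℝ)) 0) *
      (x₁ s 0 * x₂ s 1 - x₁ s 1 * x₂ s 0))
      = ∫ s in R, (fderiv ℝ G s (1, 0) + (-(fderiv ℝ P s)) (0, 1)) := by
    apply setIntegral_congr_fun measurableSet_Icc
    intro s hs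
    simp only [ContinuousLinearMap.neg_apply]
    rw [← key s (hRV hs)]
    ring
  rw [heq]
  rw [hdiv]
  show (((∫ t in a₁..b₁, -P (t, b₂)) - ∫ t in a₁..b₁, -P (t, a₂)) + ∫ t in a₂..b₂, G (b₁, t))
      - ∫ t in a₂..b₂, G (a₁, t)
    = (∫ t in a₁..b₁, P (t, a₂)) + (∫ t in a₂..b₂, G (b₁, t))
      - (∫ t in a₁..b₁, P (t, b₂)) - ∫ t in a₂..b₂, G (a₁, t)
  rw [intervalIntegral.integral_neg, intervalIntegral.integral_neg]
  ring
end
end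

section
/- (Green's theorem, flux/divergence form, on a 2-patch in the plane.) Let R = [a¹,b¹]×[a²,b²] ⊂ ℝ², let x : U₀ → ℝ² be a C² map on an open neighborhood U₀ of R whose partial derivatives x₁(s) = ∂x/∂s¹(s) and x₂(s) = ∂x/∂s²(s) are linearly independent for every s ∈ R, and let F = (P,Q) : U → ℝ² be a C¹ vector field on an open set U containing x(R). Let J : ℝ² → ℝ² be the rotation J(v₁,v₂) = (v₂,−v₁). Then ∫_R (∂P/∂x + ∂Q/∂y)(x(s)) · det[x₁(s), x₂(s)] ds¹ds² = ∫_{a¹}^{b¹} ⟪F(x(t,a²)), J(x₁(t,a²))⟫ dt + ∫_{a²}^{b²} ⟪F(x(b¹,t)), J(x₂(b¹,t))⟫ dt − ∫_{a¹}^{b¹} ⟪F(x(t,b²)), J(x₁(t,b²))⟫ dt − ∫_{a²}^{b²} ⟪F(x(a¹,t)), J(x₂(a¹,t))⟫ dt, where det[u,v] = u₁v₂ − u₂v₁ and ∂P/∂x, ∂Q/∂y denote partial derivatives with respect to the first and second coordinates of ℝ². -/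
open MeasureTheory RealInnerProductSpace

noncomputable section

/-- The rotation `J(v₁,v₂) = (v₂,−v₁)` of the plane. -/
def rotJ (v : EuclideanSpace ℝ (Fin 2)) : EuclideanSpace ℝ (Fin 2) :=
  (WithLp.equiv 2 (Fin 2 → ℝ)).symm ![v 1, -v 0]

set_option linter.unusedVariables false

lemma inner_rotJ (u v : EuclideanSpace ℝ (Fin 2)) : ⟪u, rotJ v⟫ = u 0 * v 1 - u 1 * v 0 := by
  simp [rotJ, PiLp.inner_apply, Fin.sum_univ_two]; ring

lemma clm_expand (A : EuclideanSpace ℝ (Fin 2) →L[ℝ] EuclideanSpace ℝ (Fin 2))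
    (v : EuclideanSpace ℝ (Fin 2)) (i : Fin 2) :
    A v i = v 0 * A (EuclideanSpace.single 0 1) i + v 1 * A (EuclideanSpace.single 1 1) i := by
  have hv : v = v 0 • EuclideanSpace.single 0 (1:ℝ) + v 1 • EuclideanSpace.single 1 (1:ℝ) := by
    ext j; fin_cases j <;> simp [EuclideanSpace.single_apply]
  conv_lhs => rw [hv]
  simp

/-- Green's theorem, flux/divergence form, on a 2-patch in the plane.
`∫_R (∂P/∂x + ∂Q/∂y)(x(s))·det[x₁(s),x₂(s)] ds` equals the outward flux of `F`
through the boundary of the patch. -/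
theorem greens_theorem_flux
    (a₁ b₁ a₂ b₂ : ℝ) (ha₁ : a₁ < b₁) (ha₂ : a₂ < b₂)
    (U₀ : Set (ℝ × ℝ)) (hU₀ : IsOpen U₀) (hRU₀ : Set.Icc (a₁, a₂) (b₁, b₂) ⊆ U₀)
    (x : ℝ × ℝ → EuclideanSpace ℝ (Fin 2)) (hx : ContDiffOn ℝ 2 x U₀)
    (x₁ x₂ : ℝ × ℝ → EuclideanSpace ℝ (Fin 2))
    (hx₁ : ∀ s, x₁ s = fderiv ℝ x s (1, 0)) (hx₂ : ∀ s, x₂ s = fderiv ℝ x s (0, 1))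
    (hreg : ∀ s ∈ Set.Icc (a₁, a₂) (b₁, b₂), LinearIndependent ℝ ![x₁ s, x₂ s])
    (U : Set (EuclideanSpace ℝ (Fin 2))) (hU : IsOpen U)
    (hxRU : x '' Set.Icc (a₁, a₂) (b₁, b₂) ⊆ U)
    (F : EuclideanSpace ℝ (Fin 2) → EuclideanSpace ℝ (Fin 2)) (hF : ContDiffOn ℝ 1 F U) :
    (∫ s in Set.Icc (a₁, a₂) (b₁, b₂),
        (fderiv ℝ F (x s) (EuclideanSpace.single 0 (1 : ℝ)) 0
          + fderiv ℝ F (x s) (EuclideanSpace.single 1 (1 : ℝ)) 1) *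
        (x₁ s 0 * x₂ s 1 - x₁ s 1 * x₂ s 0))
      = (∫ t in a₁..b₁, ⟪F (x (t, a₂)), rotJ (x₁ (t, a₂))⟫)
        + (∫ t in a₂..b₂, ⟪F (x (b₁, t)), rotJ (x₂ (b₁, t))⟫)
        - (∫ t in a₁..b₁, ⟪F (x (t, b₂)), rotJ (x₁ (t, b₂))⟫)
        - (∫ t in a₂..b₂, ⟪F (x (a₁, t)), rotJ (x₂ (a₁, t))⟫) := by
  set R : Set (ℝ × ℝ) := Set.Icc (a₁, a₂) (b₁, b₂) with hRdef
  set V : Set (ℝ × ℝ) := U₀ ∩ x ⁻¹' U with hVdef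
  have hVopen : IsOpen V := hx.continuousOn.isOpen_inter_preimage hU₀ hU
  have hRV : R ⊆ V := fun s hs => ⟨hRU₀ hs, hxRU ⟨s, hs, rfl⟩⟩
  -- basic differentiability facts
  have hDx : ∀ s ∈ U₀, HasFDerivAt x (fderiv ℝ x s) s := fun s hs =>
    ((hx.contDiffAt (hU₀.mem_nhds hs)).differentiableAt (by norm_num)).hasFDerivAt
  have hDx1 : ContDiffOn ℝ 1 (fderiv ℝ x) U₀ := hx.fderiv_of_isOpen hU₀ (by norm_num)
  have hD2x : ∀ s ∈ U₀, HasFDerivAt (fderiv ℝ x) (fderiv ℝ (fderiv ℝ x) s) s := fun s hs =>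
    ((hDx1.contDiffAt (hU₀.mem_nhds hs)).differentiableAt one_ne_zero).hasFDerivAt
  have hFd : ∀ p ∈ U, HasFDerivAt F (fderiv ℝ F p) p := fun p hp =>
    ((hF.contDiffAt (hU.mem_nhds hp)).differentiableAt one_ne_zero).hasFDerivAt
  -- component derivatives
  have hu : ∀ i : Fin 2, ∀ s ∈ V, HasFDerivAt (fun s => F (x s) i)
      ((EuclideanSpace.proj i).comp ((fderiv ℝ F (x s)).comp (fderiv ℝ x s))) s := by
    intro i s hs
    exact (EuclideanSpace.proj i).hasFDerivAt.comp s ((hFd _ hs.2).comp s (hDx s hs.1))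
  have hw : ∀ (v : ℝ × ℝ) (i : Fin 2), ∀ s ∈ U₀, HasFDerivAt (fun s => fderiv ℝ x s v i)
      ((EuclideanSpace.proj i).comp
        ((ContinuousLinearMap.apply ℝ (EuclideanSpace ℝ (Fin 2)) v).comp
          (fderiv ℝ (fderiv ℝ x) s))) s := by
    intro v i s hs
    exact (EuclideanSpace.proj i).hasFDerivAt.comp s
      ((ContinuousLinearMap.apply ℝ (EuclideanSpace ℝ (Fin 2)) v).hasFDerivAt.comp s
        (hD2x s hs))
  set f : ℝ × ℝ → ℝ := fun s =>
    F (x s) 0 * fderiv ℝ x s (0, 1) 1 - F (x s) 1 * fderiv ℝ x s (0, 1) 0 with hfdef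
  set g : ℝ × ℝ → ℝ := fun s =>
    F (x s) 1 * fderiv ℝ x s (1, 0) 0 - F (x s) 0 * fderiv ℝ x s (1, 0) 1 with hgdef
  have hdf := fun (s : ℝ × ℝ) (hs : s ∈ V) =>
    ((hu 0 s hs).mul (hw (0, 1) 1 s hs.1)).sub ((hu 1 s hs).mul (hw (0, 1) 0 s hs.1))
  have hdg := fun (s : ℝ × ℝ) (hs : s ∈ V) =>
    ((hu 1 s hs).mul (hw (1, 0) 0 s hs.1)).sub ((hu 0 s hs).mul (hw (1, 0) 1 s hs.1))
  have hdf' : ∀ s ∈ V, HasFDerivAt f (fderiv ℝ f s) s := fun s hs =>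
    (hdf s hs).differentiableAt.hasFDerivAt
  have hdg' : ∀ s ∈ V, HasFDerivAt g (fderiv ℝ g s) s := fun s hs =>
    (hdg s hs).differentiableAt.hasFDerivAt
  -- value of the divergence
  have hval : ∀ s ∈ V, fderiv ℝ f s (1, 0) + fderiv ℝ g s (0, 1)
      = (fderiv ℝ F (x s) (EuclideanSpace.single 0 (1 : ℝ)) 0
          + fderiv ℝ F (x s) (EuclideanSpace.single 1 (1 : ℝ)) 1) *
        (fderiv ℝ x s (1, 0) 0 * fderiv ℝ x s (0, 1) 1
          - fderiv ℝ x s (1, 0) 1 * fderiv ℝ x s (0, 1) 0) := by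
    intro s hs
    have hsymm : fderiv ℝ (fderiv ℝ x) s (1, 0) (0, 1)
        = fderiv ℝ (fderiv ℝ x) s (0, 1) (1, 0) :=
      second_derivative_symmetric_of_eventually
        (Filter.eventually_of_mem (hU₀.mem_nhds hs.1) (fun y hy => hDx y hy))
        (hD2x s hs.1) _ _
    rw [HasFDerivAt.fderiv (f := f) (hdf s hs), HasFDerivAt.fderiv (f := g) (hdg s hs)]
    simp only [ContinuousLinearMap.add_apply, ContinuousLinearMap.sub_apply,
      ContinuousLinearMap.smul_apply, ContinuousLinearMap.comp_apply,
      ContinuousLinearMap.apply_apply, PiLp.proj_apply, smul_eq_mul]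
    rw [clm_expand (fderiv ℝ F (x s)) (fderiv ℝ x s (1, 0)) 0,
      clm_expand (fderiv ℝ F (x s)) (fderiv ℝ x s (1, 0)) 1,
      clm_expand (fderiv ℝ F (x s)) (fderiv ℝ x s (0, 1)) 0,
      clm_expand (fderiv ℝ F (x s)) (fderiv ℝ x s (0, 1)) 1, hsymm]
    ring

  -- continuity of everything on R
  have hmeas : MeasurableSet R := measurableSet_Icc
  have hxc : ContinuousOn x R := hx.continuousOn.mono hRU₀
  have hBc : ContinuousOn (fderiv ℝ x) R :=
    (hx.continuousOn_fderiv_of_isOpen hU₀ (by norm_num)).mono hRU₀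
  have hAc : ContinuousOn (fun s => fderiv ℝ F (x s)) R :=
    (hF.continuousOn_fderiv_of_isOpen hU le_rfl).comp hxc (fun s hs => hxRU ⟨s, hs, rfl⟩)
  have hB : ∀ (v : ℝ × ℝ) (i : Fin 2), ContinuousOn (fun s => fderiv ℝ x s v i) R := by
    intro v i
    exact (EuclideanSpace.proj i).continuous.comp_continuousOn (hBc.clm_apply continuousOn_const)
  have hA : ∀ (v : EuclideanSpace ℝ (Fin 2)) (i : Fin 2),
      ContinuousOn (fun s => fderiv ℝ F (x s) v i) R := by
    intro v i
    exact (EuclideanSpace.proj i).continuous.comp_continuousOn (hAc.clm_apply continuousOn_const)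
  have hφc : ContinuousOn (fun s =>
      (fderiv ℝ F (x s) (EuclideanSpace.single 0 (1 : ℝ)) 0
        + fderiv ℝ F (x s) (EuclideanSpace.single 1 (1 : ℝ)) 1) *
      (fderiv ℝ x s (1, 0) 0 * fderiv ℝ x s (0, 1) 1
        - fderiv ℝ x s (1, 0) 1 * fderiv ℝ x s (0, 1) 0)) R :=
    ((hA _ 0).add (hA _ 1)).mul (((hB _ 0).mul (hB _ 1)).sub ((hB _ 1).mul (hB _ 0)))
  have Hi : IntegrableOn (fun s => fderiv ℝ f s (1, 0) + fderiv ℝ g s (0, 1)) R :=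
    (hφc.integrableOn_compact isCompact_Icc).congr_fun
      (fun s hs => (hval s (hRV hs)).symm) hmeas
  have Hcf : ContinuousOn f R := fun s hs => (hdf s (hRV hs)).continuousAt.continuousWithinAt
  have Hcg : ContinuousOn g R := fun s hs => (hdg s (hRV hs)).continuousAt.continuousWithinAt
  have hsub : Set.Ioo a₁ b₁ ×ˢ Set.Ioo a₂ b₂ ⊆ R := by
    rw [hRdef, Set.Icc_prod_eq]
    exact Set.prod_mono Set.Ioo_subset_Icc_self Set.Ioo_subset_Icc_self
  have main := integral_divergence_prod_Icc_of_hasFDerivAt_off_countable_of_le f g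
    (fderiv ℝ f) (fderiv ℝ g) (a₁, a₂) (b₁, b₂) (Prod.mk_le_mk.2 ⟨ha₁.le, ha₂.le⟩)
    ∅ Set.countable_empty Hcf Hcg
    (fun p hp => hdf' p (hRV (hsub hp.1)))
    (fun p hp => hdg' p (hRV (hsub hp.1))) Hi
  have hL : (∫ s in R,
      (fderiv ℝ F (x s) (EuclideanSpace.single 0 (1 : ℝ)) 0
        + fderiv ℝ F (x s) (EuclideanSpace.single 1 (1 : ℝ)) 1) *
      (x₁ s 0 * x₂ s 1 - x₁ s 1 * x₂ s 0))
      = ∫ s in R, (fderiv ℝ f s (1, 0) + fderiv ℝ g s (0, 1)) := by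
    apply setIntegral_congr_fun hmeas
    intro s hs
    simp only [hx₁, hx₂]
    exact (hval s (hRV hs)).symm
  have hb1 : ∀ s, ⟪F (x s), rotJ (x₁ s)⟫ = -(g s) := by
    intro s
    simp only [inner_rotJ, hx₁, hgdef]
    ring
  have hb2 : ∀ s, ⟪F (x s), rotJ (x₂ s)⟫ = f s := by
    intro s
    simp only [inner_rotJ, hx₂, hfdef]
  rw [hL, main]
  simp only [hb1, hb2, intervalIntegral.integral_neg]
  ring
end
end

section
/- The Cauchy kernel is monogenic away from the origin: let n ≥ 2 and define E : ℝⁿ∖{0} → ℝⁿ by E(y) = y/‖y‖ⁿ. Then E is C¹ on ℝⁿ∖{0} and for every y ≠ 0, (∂E)(y) := ∑_{i=1}^{n} ι(e_i) · ι( (∂E/∂y_i)(y) ) = 0 in G_n, where (e_i) is the standard orthonormal basis of ℝⁿ, ∂E/∂y_i is the partial derivative of E in direction e_i, and the product is the product in G_n. -/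
noncomputable section

/-- The geometric algebra `G_n` of Euclidean `n`-space. -/
abbrev G (n : ℕ) := CliffordAlgebra (Qf n)

lemma Qf_eq_norm_sq {n : ℕ} (v : EuclideanSpace ℝ (Fin n)) : Qf n v = ‖v‖ ^ 2 := by
  rw [Qf, LinearMap.BilinMap.toQuadraticMap_apply, innerₗ_apply_apply,
    real_inner_self_eq_norm_sq]

lemma sum_coord_smul_single {n : ℕ} (y : EuclideanSpace ℝ (Fin n)) :
    (∑ i : Fin n, y i • EuclideanSpace.single i (1:ℝ)) = y := by
  ext j
  have : (∑ i : Fin n, y i • EuclideanSpace.single i (1:ℝ)) j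
      = ∑ i : Fin n, (y i • EuclideanSpace.single i (1:ℝ)) j :=
    by rw [WithLp.ofLp_sum, Finset.sum_apply]
  rw [this]
  simp [EuclideanSpace.single_apply]

lemma cauchy_kernel_hasFDerivAt {n : ℕ} (hn : 2 ≤ n) (y : EuclideanSpace ℝ (Fin n))
    (hy : y ≠ 0) :
    HasFDerivAt (fun y : EuclideanSpace ℝ (Fin n) => (‖y‖ ^ (n:ℝ))⁻¹ • y)
      ((‖y‖ ^ (n:ℝ))⁻¹ • (ContinuousLinearMap.id ℝ _) +
        (((ContinuousLinearMap.smulRight (1 : ℝ →L[ℝ] ℝ) (-((‖y‖ ^ (n:ℝ)) ^ 2)⁻¹)).comp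
          (((n:ℝ) * ‖y‖ ^ ((n:ℝ) - 2)) • innerSL ℝ y)).smulRight y)) y := by
  have h1 : (1:ℝ) < n := by exact_mod_cast Nat.lt_of_lt_of_le one_lt_two hn
  have hA := hasFDerivAt_norm_rpow y h1
  have hpos : (0:ℝ) < ‖y‖ := norm_pos_iff.mpr hy
  have hne : ‖y‖ ^ (n:ℝ) ≠ 0 := by positivity
  have hinv : HasFDerivAt (fun y : EuclideanSpace ℝ (Fin n) => (‖y‖ ^ (n:ℝ))⁻¹)
      ((ContinuousLinearMap.smulRight (1 : ℝ →L[ℝ] ℝ) (-((‖y‖ ^ (n:ℝ)) ^ 2)⁻¹)).comp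
        (((n:ℝ) * ‖y‖ ^ ((n:ℝ) - 2)) • innerSL ℝ y)) y :=
    (hasFDerivAt_inv hne).comp y hA
  exact hinv.smul (hasFDerivAt_id y)

/-- the Cauchy kernel `E(y) = y/‖y‖ⁿ` is `C¹` away from the origin and is
monogenic there: `∑ᵢ ι(eᵢ)·ι(∂E/∂yᵢ(y)) = 0` in `G_n` for every `y ≠ 0` (`n ≥ 2`). -/
theorem cauchy_kernel_monogenic {n : ℕ} (hn : 2 ≤ n)
    (E : EuclideanSpace ℝ (Fin n) → EuclideanSpace ℝ (Fin n))
    (hE : ∀ y, E y = (‖y‖ ^ n)⁻¹ • y) :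
    ContDiffOn ℝ 1 E {y : EuclideanSpace ℝ (Fin n) | y ≠ 0} ∧
    ∀ y : EuclideanSpace ℝ (Fin n), y ≠ 0 →
      ∑ i : Fin n,
        CliffordAlgebra.ι (Qf n) (EuclideanSpace.single i (1 : ℝ)) *
          CliffordAlgebra.ι (Qf n) (fderiv ℝ E y (EuclideanSpace.single i (1 : ℝ)))
        = 0 := by
  have hEeq : E = fun y : EuclideanSpace ℝ (Fin n) => (‖y‖ ^ (n:ℝ))⁻¹ • y := by
    funext y
    rw [hE y, Real.rpow_natCast]
  constructor
  · -- continuous differentiability away from the origin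
    rw [hEeq]
    intro y hy
    apply ContDiffAt.contDiffWithinAt
    have hpos : (0:ℝ) < ‖y‖ := norm_pos_iff.mpr hy
    have hnorm : ContDiffAt ℝ 1 (fun y : EuclideanSpace ℝ (Fin n) => ‖y‖ ^ (n:ℝ)) y :=
      (contDiffAt_norm ℝ hy).rpow_const_of_ne (ne_of_gt hpos)
    exact (hnorm.inv (by positivity)).smul contDiffAt_id
  · intro y hy
    have hpos : (0:ℝ) < ‖y‖ := norm_pos_iff.mpr hy
    have hne : ‖y‖ ^ (n:ℝ) ≠ 0 := by positivity
    set A : ℝ := (‖y‖ ^ (n:ℝ))⁻¹ with hAdef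
    set C : ℝ := -((‖y‖ ^ (n:ℝ)) ^ 2)⁻¹ * ((n:ℝ) * ‖y‖ ^ ((n:ℝ) - 2)) with hCdef
    set e : Fin n → EuclideanSpace ℝ (Fin n) := fun i => EuclideanSpace.single i (1:ℝ) with he
    have hfd : fderiv ℝ E y
        = A • (ContinuousLinearMap.id ℝ _) +
          ((ContinuousLinearMap.smulRight (1 : ℝ →L[ℝ] ℝ) (-((‖y‖ ^ (n:ℝ)) ^ 2)⁻¹)).comp
            (((n:ℝ) * ‖y‖ ^ ((n:ℝ) - 2)) • innerSL ℝ y)).smulRight y := by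
      rw [hEeq]
      exact (cauchy_kernel_hasFDerivAt hn y hy).fderiv
    have hD : ∀ i : Fin n, fderiv ℝ E y (e i) = A • e i + (C * y i) • y := by
      intro i
      rw [hfd]
      simp only [ContinuousLinearMap.add_apply, ContinuousLinearMap.smul_apply,
        ContinuousLinearMap.coe_id', id_eq, ContinuousLinearMap.smulRight_apply,
        ContinuousLinearMap.comp_apply, ContinuousLinearMap.one_apply, innerSL_apply_apply,
        he]
      rw [EuclideanSpace.inner_single_right]
      simp only [RCLike.star_def, conj_trivial, one_mul, smul_smul]
      congr 2
      rw [hCdef]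
      simp only [smul_eq_mul]
      ring
    set ι' := CliffordAlgebra.ι (Qf n)
    have step : ∀ i : Fin n, ι' (e i) * ι' (fderiv ℝ E y (e i))
        = A • algebraMap ℝ (G n) (Qf n (e i)) + (C * y i) • (ι' (e i) * ι' y) := by
      intro i
      rw [hD i, map_add, map_smul, map_smul, mul_add, mul_smul_comm, mul_smul_comm,
        CliffordAlgebra.ι_sq_scalar]
    calc ∑ i : Fin n, ι' (e i) * ι' (fderiv ℝ E y (e i))
        = ∑ i : Fin n, (A • algebraMap ℝ (G n) (Qf n (e i)) + (C * y i) • (ι' (e i) * ι' y)) := by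
          exact Finset.sum_congr rfl fun i _ => step i
      _ = (∑ i : Fin n, A • algebraMap ℝ (G n) (Qf n (e i)))
            + ∑ i : Fin n, (C * y i) • (ι' (e i) * ι' y) := Finset.sum_add_distrib
      _ = ((n:ℝ) * A) • (1 : G n) + (C * ‖y‖ ^ 2) • (1 : G n) := by
          congr 1
          · have hq : ∀ i : Fin n, Qf n (e i) = 1 := by
              intro i
              rw [Qf_eq_norm_sq, he]
              simp
            simp only [hq, map_one]
            rw [Finset.sum_const, Finset.card_univ, Fintype.card_fin]
            rw [← Nat.cast_smul_eq_nsmul ℝ, smul_smul]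
          · have : ∑ i : Fin n, (C * y i) • (ι' (e i) * ι' y)
                = C • ((∑ i : Fin n, y i • ι' (e i)) * ι' y) := by
              rw [Finset.sum_mul, Finset.smul_sum]
              refine Finset.sum_congr rfl fun i _ => ?_
              rw [smul_mul_assoc, smul_smul]
            rw [this]
            have hsum : (∑ i : Fin n, y i • ι' (e i)) = ι' y := by
              simp_rw [← map_smul]
              rw [← map_sum, sum_coord_smul_single]
            rw [hsum, CliffordAlgebra.ι_sq_scalar, Qf_eq_norm_sq,
              Algebra.algebraMap_eq_smul_one, smul_smul]
      _ = 0 := by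
          rw [← add_smul]
          have hzero : (n:ℝ) * A + C * ‖y‖ ^ 2 = 0 := by
            rw [hAdef, hCdef]
            have hab : ‖y‖ ^ ((n:ℝ) - 2) * ‖y‖ ^ 2 = ‖y‖ ^ (n:ℝ) := by
              rw [show (‖y‖:ℝ) ^ 2 = ‖y‖ ^ (2:ℝ) by rw [← Real.rpow_natCast ‖y‖ 2]; norm_num,
                ← Real.rpow_add hpos]
              ring_nf
            calc (n:ℝ) * (‖y‖ ^ (n:ℝ))⁻¹
                  + (-((‖y‖ ^ (n:ℝ)) ^ 2)⁻¹ * ((n:ℝ) * ‖y‖ ^ ((n:ℝ) - 2))) * ‖y‖ ^ 2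
                = (n:ℝ) * (‖y‖ ^ (n:ℝ))⁻¹
                  + -(((‖y‖ ^ (n:ℝ)) ^ 2)⁻¹) * ((n:ℝ) * (‖y‖ ^ ((n:ℝ) - 2) * ‖y‖ ^ 2)) := by
                  ring
              _ = 0 := by rw [hab]; field_simp; ring
          rw [hzero, zero_smul]
end
end

section
/- Let n ≥ 1, let k be a real number, and define g : ℝⁿ∖{0} → ℝⁿ by g(x) = x/‖x‖^k. Then g is differentiable on ℝⁿ∖{0} and for every x ≠ 0 its vector derivative in G_n is the scalar (∂g)(x) := ∑_{i=1}^{n} ι(e_i) · ι( (∂g/∂x_i)(x) ) = ((n−k)/‖x‖^k)·1, where (e_i) is the standard orthonormal basis of ℝⁿ, ∂g/∂x_i is the partial derivative of g in direction e_i, and the product is the product in G_n. -/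
noncomputable section

open RealInnerProductSpace in
lemma aux_hasFDerivAt {n : ℕ} (k : ℝ) (x : EuclideanSpace ℝ (Fin n)) (hx : x ≠ 0) :
    HasFDerivAt (fun y : EuclideanSpace ℝ (Fin n) => (‖y‖ ^ k)⁻¹ • y)
      ((‖x‖ ^ k)⁻¹ • ContinuousLinearMap.id ℝ (EuclideanSpace ℝ (Fin n)) +
        ((-k * ‖x‖ ^ (-k - 2)) • (innerSL ℝ x)).smulRight x) x := by
  let E := EuclideanSpace ℝ (Fin n)
  have hxn : (0:ℝ) < ‖x‖ := norm_pos_iff.mpr hx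
  have hqx : ⟪x, x⟫ ≠ 0 := by
    rw [real_inner_self_eq_norm_sq]; positivity
  have hq : HasFDerivAt (fun y : E => ⟪y, y⟫)
      ((fderivInnerCLM ℝ (x, x)).comp
        ((ContinuousLinearMap.id ℝ E).prod (ContinuousLinearMap.id ℝ E))) x :=
    (hasFDerivAt_id x).inner ℝ (hasFDerivAt_id x)
  have hf := hq.rpow_const (p := -(k/2)) (Or.inl hqx)
  have h := hf.smul (hasFDerivAt_id x)
  have hnorm : ∀ y : E, (⟪y, y⟫ : ℝ) ^ (-(k/2)) = (‖y‖ ^ k)⁻¹ := by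
    intro y
    rw [real_inner_self_eq_norm_sq, ← Real.rpow_natCast ‖y‖ 2,
      ← Real.rpow_mul (norm_nonneg y),
      show ((2:ℕ):ℝ) * -(k/2) = -k by push_cast; ring,
      ← Real.rpow_neg (norm_nonneg y)]
  have hfun : (fun y : E => (‖y‖ ^ k)⁻¹ • y)
      = fun y : E => (⟪y, y⟫ : ℝ) ^ (-(k/2)) • id y := by
    funext y; rw [hnorm]; rfl
  have hCLM : (‖x‖ ^ k)⁻¹ • ContinuousLinearMap.id ℝ E +
        ((-k * ‖x‖ ^ (-k - 2)) • (innerSL ℝ x)).smulRight x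
      = (⟪x, x⟫ : ℝ) ^ (-(k/2)) • ContinuousLinearMap.id ℝ E +
        ((-(k/2) * (⟪x, x⟫ : ℝ) ^ (-(k/2) - 1)) •
          (fderivInnerCLM ℝ (x, x)).comp
            ((ContinuousLinearMap.id ℝ E).prod (ContinuousLinearMap.id ℝ E))).smulRight
          (id x) := by
    refine ContinuousLinearMap.ext fun v => ?_
    simp only [ContinuousLinearMap.add_apply, ContinuousLinearMap.smul_apply,
      ContinuousLinearMap.coe_smul', Pi.smul_apply, ContinuousLinearMap.id_apply,
      ContinuousLinearMap.smulRight_apply, ContinuousLinearMap.coe_comp',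
      Function.comp_apply, ContinuousLinearMap.prod_apply, fderivInnerCLM_apply,
      innerSL_apply_apply, id]
    have h2 : (-(k/2) * (⟪x, x⟫:ℝ) ^ (-(k/2) - 1)) * (⟪x, v⟫ + ⟪v, x⟫)
        = -k * ‖x‖ ^ (-k - 2) * ⟪x, v⟫ := by
      rw [real_inner_comm v x, real_inner_self_eq_norm_sq (x := x),
        ← Real.rpow_natCast ‖x‖ 2, ← Real.rpow_mul (norm_nonneg x),
        show ((2:ℕ):ℝ) * (-(k/2) - 1) = -k - 2 by push_cast; ring]
      ring
    rw [hnorm x]; simp only [smul_eq_mul]; rw [h2]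
  rw [hfun, hCLM]; exact h

lemma sum_single_smul {n : ℕ} (x : EuclideanSpace ℝ (Fin n)) :
    ∑ i : Fin n, (x i) • EuclideanSpace.single i (1:ℝ) = x := by
  have := (EuclideanSpace.basisFun (Fin n) ℝ).sum_repr x
  simpa [EuclideanSpace.basisFun_apply, EuclideanSpace.basisFun_repr] using this

lemma Qf_apply {n : ℕ} (x : EuclideanSpace ℝ (Fin n)) : Qf n x = ‖x‖ ^ 2 := by
  have : Qf n x = inner ℝ x x := rfl
  rw [this, real_inner_self_eq_norm_sq]



/-- for `g(x) = x/‖x‖^k` (`k : ℝ`, `n ≥ 1`), `g` is differentiable away from `0`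
and its vector derivative is the scalar `∂g(x) = ∑ᵢ ι(eᵢ)·ι(∂g/∂xᵢ(x)) = (n−k)/‖x‖^k`. -/

theorem vector_derivative_x_div_norm_pow {n : ℕ} (hn : 1 ≤ n) (k : ℝ)
    (g : EuclideanSpace ℝ (Fin n) → EuclideanSpace ℝ (Fin n))
    (hg : ∀ x, g x = (‖x‖ ^ k)⁻¹ • x) :
    DifferentiableOn ℝ g {x : EuclideanSpace ℝ (Fin n) | x ≠ 0} ∧
    ∀ x : EuclideanSpace ℝ (Fin n), x ≠ 0 →
      ∑ i : Fin n,
        CliffordAlgebra.ι (Qf n) (EuclideanSpace.single i (1 : ℝ)) *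
          CliffordAlgebra.ι (Qf n) (fderiv ℝ g x (EuclideanSpace.single i (1 : ℝ)))
        = algebraMap ℝ (G n) ((n - k) / ‖x‖ ^ k) := by
  have hg' : g = fun y => (‖y‖ ^ k)⁻¹ • y := funext hg
  subst hg'
  constructor
  · intro x hx
    exact (aux_hasFDerivAt k x hx).differentiableAt.differentiableWithinAt
  · intro x hx
    have hxn : (0:ℝ) < ‖x‖ := norm_pos_iff.mpr hx
    set ι' := CliffordAlgebra.ι (Qf n) with hι
    set e : Fin n → EuclideanSpace ℝ (Fin n) := fun i => EuclideanSpace.single i (1:ℝ) with he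
    set b : ℝ := -k * ‖x‖ ^ (-k - 2) with hb
    have hfd : ∀ i : Fin n, fderiv ℝ (fun y : EuclideanSpace ℝ (Fin n) => (‖y‖ ^ k)⁻¹ • y) x (e i)
        = (‖x‖ ^ k)⁻¹ • e i + (b * x i) • x := by
      intro i
      rw [(aux_hasFDerivAt k x hx).fderiv]
      simp only [ContinuousLinearMap.add_apply, ContinuousLinearMap.smul_apply,
        ContinuousLinearMap.coe_smul', Pi.smul_apply, ContinuousLinearMap.id_apply,
        ContinuousLinearMap.smulRight_apply, innerSL_apply_apply, smul_eq_mul]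
      congr 2
      simp [he, hb, EuclideanSpace.inner_single_right]
    have hQe : ∀ i : Fin n, Qf n (e i) = 1 := by
      intro i
      rw [Qf_apply]
      simp [he, EuclideanSpace.norm_single]
    have hsum1 : ∑ i : Fin n, ι' (e i) * ι' (e i) = (n : ℝ) • (1 : G n) := by
      have : ∀ i : Fin n, ι' (e i) * ι' (e i) = 1 := fun i => by
        rw [hι, CliffordAlgebra.ι_sq_scalar, hQe, map_one]
      simp [this, Nat.cast_smul_eq_nsmul]
    have hsum2 : ∑ i : Fin n, (b * x i) • ι' (e i) = b • ι' x := by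
      have hx' : ∑ i : Fin n, (x i) • ι' (e i) = ι' x := by
        conv_rhs => rw [← sum_single_smul x]
        rw [map_sum]
        simp [he]
      simp_rw [mul_smul]
      rw [← Finset.smul_sum, hx']
    have key : ‖x‖ ^ (-k - 2) * (‖x‖:ℝ) ^ (2:ℕ) = (‖x‖ ^ k)⁻¹ := by
      rw [← Real.rpow_natCast ‖x‖ 2, ← Real.rpow_add hxn,
        show -k - 2 + ((2:ℕ):ℝ) = -k by push_cast; ring, Real.rpow_neg (norm_nonneg x)]
    calc ∑ i : Fin n, ι' (e i) * ι' (fderiv ℝ (fun y : EuclideanSpace ℝ (Fin n) => (‖y‖ ^ k)⁻¹ • y) x (e i))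
        = ∑ i : Fin n, ((‖x‖ ^ k)⁻¹ • (ι' (e i) * ι' (e i))
            + ((b * x i) • ι' (e i)) * ι' x) := by
          refine Finset.sum_congr rfl fun i _ => ?_
          rw [hfd i, map_add, map_smul, map_smul, mul_add, mul_smul_comm, smul_mul_assoc,
            mul_smul_comm]
      _ = (‖x‖ ^ k)⁻¹ • (∑ i : Fin n, ι' (e i) * ι' (e i))
            + (∑ i : Fin n, (b * x i) • ι' (e i)) * ι' x := by
          rw [Finset.sum_add_distrib, Finset.smul_sum, Finset.sum_mul]
      _ = (‖x‖ ^ k)⁻¹ • ((n : ℝ) • (1 : G n)) + (b • ι' x) * ι' x := by rw [hsum1, hsum2]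
      _ = algebraMap ℝ (G n) ((n - k) / ‖x‖ ^ k) := by
          rw [smul_mul_assoc, hι, CliffordAlgebra.ι_sq_scalar, Qf_apply, smul_smul]
          simp only [Algebra.smul_def, mul_one]
          rw [← map_mul, ← map_add]
          congr 1
          rw [hb, mul_assoc, key, div_eq_mul_inv]
          ring
end
end
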